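/- For all natural numbers n and k, the complete homogeneous symmetric sum ∑ x_1·x_2⋯x_k, taken over all weakly increasing integer sequences 1 ≤ x_1 ≤ x_2 ≤ ⋯ ≤ x_k ≤ n (equivalently, over all k-element multisets with elements from {1, 2, …, n}), equals the Stirling subset number S(n+k, n). -/

import Mathlib

/-- The Stirling subset number `S(n,k)`: the number of partitions of an
`n`-element set into exactly `k` nonempty subsets. -/
noncomputable def stirlingSubset (n k : ℕ) : ℕ :=
  Nat.card {P : Finset (Finset (Fin n)) //
    P.card = k ∧ (∀ s ∈ P, s.Nonempty) ∧ ∀ x : Fin n, ∃! s, s ∈ P ∧ x ∈ s}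

open Finset Fin

section Aux

variable {m : ℕ}

noncomputable def upF (s : Finset (Fin m)) : Finset (Fin (m+1)) := s.map Fin.castSuccEmb

noncomputable def downF (t : Finset (Fin (m+1))) : Finset (Fin m) :=
  t.preimage Fin.castSucc ((Fin.castSucc_injective m).injOn)

@[simp] lemma mem_upF {s : Finset (Fin m)} {y : Fin m} : y.castSucc ∈ upF s ↔ y ∈ s := by
  simp only [upF, Finset.mem_map, Fin.coe_castSuccEmb]
  exact ⟨fun ⟨a, ha, h⟩ => (Fin.castSucc_injective m h) ▸ ha, fun h => ⟨y, h, rfl⟩⟩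

lemma last_not_mem_upF {s : Finset (Fin m)} : Fin.last m ∉ upF s := by
  simp only [upF, Finset.mem_map, Fin.coe_castSuccEmb]
  rintro ⟨y, -, hy⟩
  exact absurd hy (Fin.ne_of_lt (Fin.castSucc_lt_last y))

@[simp] lemma mem_downF {t : Finset (Fin (m+1))} {y : Fin m} : y ∈ downF t ↔ y.castSucc ∈ t := by
  simp [downF]

lemma upF_injective : Function.Injective (upF (m := m)) :=
  Finset.map_injective _

lemma upF_downF {t : Finset (Fin (m+1))} (h : Fin.last m ∉ t) : upF (downF t) = t := by
  ext x
  rcases eq_or_ne x (Fin.last m) with rfl | hx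
  · simp [last_not_mem_upF, h]
  · obtain ⟨y, rfl⟩ := Fin.eq_castSucc_of_ne_last hx
    simp

@[simp] lemma downF_upF (s : Finset (Fin m)) : downF (upF s) = s := by
  ext y; simp

lemma upF_nonempty {s : Finset (Fin m)} (h : s.Nonempty) : (upF s).Nonempty := by
  obtain ⟨y, hy⟩ := h; exact ⟨y.castSucc, mem_upF.2 hy⟩

lemma downF_nonempty {t : Finset (Fin (m+1))} (hne : t.Nonempty) (h : Fin.last m ∉ t) :
    (downF t).Nonempty := by
  obtain ⟨x, hx⟩ := hne
  have hxl : x ≠ Fin.last m := fun e => h (e ▸ hx)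
  obtain ⟨y, rfl⟩ := Fin.eq_castSucc_of_ne_last hxl
  exact ⟨y, mem_downF.2 hx⟩

abbrev PtP (n k : ℕ) := {P : Finset (Finset (Fin n)) //
    P.card = k ∧ (∀ s ∈ P, s.Nonempty) ∧ ∀ x : Fin n, ∃! s, s ∈ P ∧ x ∈ s}

section Rec
variable {j : ℕ}

lemma singleton_last_not_mem_image {Q : Finset (Finset (Fin m))} :
    ({Fin.last m} : Finset (Fin (m+1))) ∉ Q.image upF := by
  simp only [Finset.mem_image]
  rintro ⟨u, -, hu⟩
  exact last_not_mem_upF (hu ▸ Finset.mem_singleton_self _)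

lemma B_not_mem_image {s : Finset (Fin m)} {R : Finset (Finset (Fin m))} :
    insert (Fin.last m) (upF s) ∉ R.image upF := by
  simp only [Finset.mem_image]
  rintro ⟨u, -, hu⟩
  exact last_not_mem_upF (hu ▸ Finset.mem_insert_self _ _)

lemma phiL_mem (Q : PtP m j) :
    (insert {Fin.last m} (Q.1.image upF)).card = j + 1 ∧
    (∀ s ∈ insert {Fin.last m} (Q.1.image upF), s.Nonempty) ∧
    ∀ x : Fin (m+1), ∃! s, s ∈ insert {Fin.last m} (Q.1.image upF) ∧ x ∈ s := by
  obtain ⟨Q, hc, hne, hcov⟩ := Q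
  refine ⟨?_, ?_, ?_⟩
  · rw [Finset.card_insert_of_notMem singleton_last_not_mem_image,
      Finset.card_image_of_injective _ upF_injective, hc]
  · intro s hs
    rcases Finset.mem_insert.1 hs with rfl | hs
    · exact ⟨_, Finset.mem_singleton_self _⟩
    · obtain ⟨u, hu, rfl⟩ := Finset.mem_image.1 hs
      exact upF_nonempty (hne u hu)
  · intro x
    rcases eq_or_ne x (Fin.last m) with rfl | hx
    · refine ⟨{Fin.last m}, ⟨Finset.mem_insert_self _ _, Finset.mem_singleton_self _⟩, ?_⟩
      rintro t ⟨ht, hlt⟩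
      rcases Finset.mem_insert.1 ht with rfl | ht
      · rfl
      · obtain ⟨u, -, rfl⟩ := Finset.mem_image.1 ht
        exact absurd hlt last_not_mem_upF
    · obtain ⟨y, rfl⟩ := Fin.eq_castSucc_of_ne_last hx
      obtain ⟨u, ⟨hu, hyu⟩, huniq⟩ := hcov y
      refine ⟨upF u, ⟨Finset.mem_insert_of_mem (Finset.mem_image_of_mem _ hu), mem_upF.2 hyu⟩, ?_⟩
      rintro t ⟨ht, hyt⟩
      rcases Finset.mem_insert.1 ht with rfl | ht
      · exact absurd (Finset.mem_singleton.1 hyt) hx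
      · obtain ⟨u', hu', rfl⟩ := Finset.mem_image.1 ht
        rw [huniq u' ⟨hu', mem_upF.1 hyt⟩]

lemma phiR_mem (Q : PtP m (j+1)) (s : Finset (Fin m)) (hs : s ∈ Q.1) :
    (insert (insert (Fin.last m) (upF s)) ((Q.1.erase s).image upF)).card = j + 1 ∧
    (∀ t ∈ insert (insert (Fin.last m) (upF s)) ((Q.1.erase s).image upF), t.Nonempty) ∧
    ∀ x : Fin (m+1), ∃! t,
      t ∈ insert (insert (Fin.last m) (upF s)) ((Q.1.erase s).image upF) ∧ x ∈ t := by
  obtain ⟨Q, hc, hne, hcov⟩ := Q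
  refine ⟨?_, ?_, ?_⟩
  · rw [Finset.card_insert_of_notMem B_not_mem_image,
      Finset.card_image_of_injective _ upF_injective, Finset.card_erase_of_mem hs, hc]
    omega
  · intro t ht
    rcases Finset.mem_insert.1 ht with rfl | ht
    · exact ⟨_, Finset.mem_insert_self _ _⟩
    · obtain ⟨u, hu, rfl⟩ := Finset.mem_image.1 ht
      exact upF_nonempty (hne u (Finset.mem_of_mem_erase hu))
  · intro x
    rcases eq_or_ne x (Fin.last m) with rfl | hx
    · refine ⟨insert (Fin.last m) (upF s),
        ⟨Finset.mem_insert_self _ _, Finset.mem_insert_self _ _⟩, ?_⟩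
      rintro t ⟨ht, hlt⟩
      rcases Finset.mem_insert.1 ht with rfl | ht
      · rfl
      · obtain ⟨u, -, rfl⟩ := Finset.mem_image.1 ht
        exact absurd hlt last_not_mem_upF
    · obtain ⟨y, rfl⟩ := Fin.eq_castSucc_of_ne_last hx
      obtain ⟨u, ⟨hu, hyu⟩, huniq⟩ := hcov y
      rcases eq_or_ne u s with rfl | hus
      · refine ⟨insert (Fin.last m) (upF u),
          ⟨Finset.mem_insert_self _ _, Finset.mem_insert_of_mem (mem_upF.2 hyu)⟩, ?_⟩
        rintro t ⟨ht, hyt⟩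
        rcases Finset.mem_insert.1 ht with rfl | ht
        · rfl
        · obtain ⟨u', hu', rfl⟩ := Finset.mem_image.1 ht
          exact absurd (huniq u' ⟨Finset.mem_of_mem_erase hu', mem_upF.1 hyt⟩)
            (Finset.ne_of_mem_erase hu')
      · refine ⟨upF u, ⟨Finset.mem_insert_of_mem
          (Finset.mem_image_of_mem _ (Finset.mem_erase.2 ⟨hus, hu⟩)), mem_upF.2 hyu⟩, ?_⟩
        rintro t ⟨ht, hyt⟩
        rcases Finset.mem_insert.1 ht with rfl | ht
        · rcases Finset.mem_insert.1 hyt with h | h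
          · exact absurd h hx
          · exact absurd (huniq s ⟨hs, mem_upF.1 h⟩).symm hus
        · obtain ⟨u', hu', rfl⟩ := Finset.mem_image.1 ht
          rw [huniq u' ⟨Finset.mem_of_mem_erase hu', mem_upF.1 hyt⟩]

noncomputable def Phi : PtP m j ⊕ (Σ Q : PtP m (j+1), {s // s ∈ Q.1}) → PtP (m+1) (j+1)
  | Sum.inl Q => ⟨insert {Fin.last m} (Q.1.image upF), phiL_mem Q⟩
  | Sum.inr ⟨Q, s, hs⟩ =>
      ⟨insert (insert (Fin.last m) (upF s)) ((Q.1.erase s).image upF), phiR_mem Q s hs⟩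

lemma Phi_injective : Function.Injective (Phi (m := m) (j := j)) := by
  rintro (Q | ⟨Q, s, hs⟩) (Q' | ⟨Q', s', hs'⟩) h
  · -- inl inl
    simp only [Phi, Subtype.mk.injEq] at h
    have h2 : Q.1.image upF = Q'.1.image upF := by
      rw [← Finset.erase_insert (singleton_last_not_mem_image (Q := Q.1)), h,
        Finset.erase_insert (singleton_last_not_mem_image (Q := Q'.1))]
    congr 1
    exact Subtype.ext (Finset.image_injective upF_injective h2)
  · -- inl inr : impossible
    exfalso
    simp only [Phi, Subtype.mk.injEq] at h
    have hmem : ({Fin.last m} : Finset (Fin (m+1))) ∈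
        insert (insert (Fin.last m) (upF s')) ((Q'.1.erase s').image upF) := by
      rw [← h]; exact Finset.mem_insert_self _ _
    rcases Finset.mem_insert.1 hmem with he | he
    · obtain ⟨y, hy⟩ := Q'.2.2.1 s' hs'
      have : y.castSucc ∈ ({Fin.last m} : Finset (Fin (m+1))) := by
        rw [he]; exact Finset.mem_insert_of_mem (mem_upF.2 hy)
      exact Fin.ne_of_lt (Fin.castSucc_lt_last y) (Finset.mem_singleton.1 this)
    · exact singleton_last_not_mem_image he
  · -- inr inl : impossible, symmetric
    exfalso
    simp only [Phi, Subtype.mk.injEq] at h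
    have hmem : ({Fin.last m} : Finset (Fin (m+1))) ∈
        insert (insert (Fin.last m) (upF s)) ((Q.1.erase s).image upF) := by
      rw [h]; exact Finset.mem_insert_self _ _
    rcases Finset.mem_insert.1 hmem with he | he
    · obtain ⟨y, hy⟩ := Q.2.2.1 s hs
      have : y.castSucc ∈ ({Fin.last m} : Finset (Fin (m+1))) := by
        rw [he]; exact Finset.mem_insert_of_mem (mem_upF.2 hy)
      exact Fin.ne_of_lt (Fin.castSucc_lt_last y) (Finset.mem_singleton.1 this)
    · exact singleton_last_not_mem_image he
  · -- inr inr
    simp only [Phi, Subtype.mk.injEq] at h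
    -- first: the blocks containing last coincide
    have hB : insert (Fin.last m) (upF s) = insert (Fin.last m) (upF s') := by
      have hmem : insert (Fin.last m) (upF s) ∈
          insert (insert (Fin.last m) (upF s')) ((Q'.1.erase s').image upF) := by
        rw [← h]; exact Finset.mem_insert_self _ _
      rcases Finset.mem_insert.1 hmem with he | he
      · exact he
      · exact absurd he B_not_mem_image
    have hss : s = s' := by
      apply upF_injective
      rw [← Finset.erase_insert (last_not_mem_upF (s := s)), hB,
        Finset.erase_insert (last_not_mem_upF (s := s'))]
    subst hss
    have h2 : (Q.1.erase s).image upF = (Q'.1.erase s).image upF := by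
      rw [← Finset.erase_insert (B_not_mem_image (s := s) (R := Q.1.erase s)), h,
        Finset.erase_insert (B_not_mem_image (s := s) (R := Q'.1.erase s))]
    have h3 : Q.1.erase s = Q'.1.erase s := Finset.image_injective upF_injective h2
    have h4 : Q.1 = Q'.1 := by
      rw [← Finset.insert_erase hs, ← Finset.insert_erase hs', h3]
    rcases Q with ⟨Q, hQ⟩; rcases Q' with ⟨Q', hQ'⟩
    simp only at h4
    subst h4
    rfl

lemma Phi_surjective : Function.Surjective (Phi (m := m) (j := j)) := by
  rintro ⟨P, hc, hne, hcov⟩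
  obtain ⟨B, ⟨hB, hlB⟩, hBuniq⟩ := hcov (Fin.last m)
  have hfree : ∀ t ∈ P.erase B, Fin.last m ∉ t := by
    intro t ht hl
    exact Finset.ne_of_mem_erase ht (hBuniq t ⟨Finset.mem_of_mem_erase ht, hl⟩)
  have himg : ((P.erase B).image downF).image upF = P.erase B := by
    rw [Finset.image_image]
    rw [show (upF ∘ downF) = fun t => upF (downF t) from rfl]
    rw [Finset.image_congr (fun t ht => upF_downF (hfree t ht))]
    exact Finset.image_id
  have hinj : Set.InjOn downF (P.erase B : Set (Finset (Fin (m+1)))) := by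
    intro a ha b hb hab
    rw [← upF_downF (hfree a ha), ← upF_downF (hfree b hb), hab]
  have hcard_img : ((P.erase B).image downF).card = j := by
    rw [Finset.card_image_of_injOn hinj, Finset.card_erase_of_mem hB, hc]
    omega
  rcases eq_or_ne B {Fin.last m} with rfl | hBne
  · -- case: {last} is a block
    refine ⟨Sum.inl ⟨(P.erase {Fin.last m}).image downF, hcard_img, ?_, ?_⟩, ?_⟩
    · intro u hu
      obtain ⟨t, ht, rfl⟩ := Finset.mem_image.1 hu
      exact downF_nonempty (hne t (Finset.mem_of_mem_erase ht)) (hfree t ht)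
    · intro y
      obtain ⟨t, ⟨ht, hyt⟩, htuniq⟩ := hcov y.castSucc
      have htB : t ≠ {Fin.last m} := by
        rintro rfl
        exact Fin.ne_of_lt (Fin.castSucc_lt_last y) (Finset.mem_singleton.1 hyt)
      refine ⟨downF t, ⟨Finset.mem_image_of_mem _ (Finset.mem_erase.2 ⟨htB, ht⟩),
        mem_downF.2 hyt⟩, ?_⟩
      rintro u ⟨hu, hyu⟩
      obtain ⟨t', ht', rfl⟩ := Finset.mem_image.1 hu
      rw [htuniq t' ⟨Finset.mem_of_mem_erase ht', mem_downF.1 hyu⟩]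
    · apply Subtype.ext
      show insert {Fin.last m} (((P.erase {Fin.last m}).image downF).image upF) = P
      rw [himg, Finset.insert_erase hB]
  · -- case: block B containing last is bigger
    have hBe_ne : (B.erase (Fin.last m)).Nonempty := by
      rcases Finset.eq_empty_or_nonempty (B.erase (Fin.last m)) with he | h
      · rcases (Finset.erase_eq_empty_iff _ _).1 he with rfl | h2
        · exact absurd hlB (Finset.notMem_empty _)
        · exact absurd h2 hBne
      · exact h
    have hBe_free : Fin.last m ∉ B.erase (Fin.last m) := Finset.notMem_erase _ _
    set s : Finset (Fin m) := downF (B.erase (Fin.last m)) with hs_def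
    have hupFs : upF s = B.erase (Fin.last m) := upF_downF hBe_free
    have hs_not_img : s ∉ (P.erase B).image downF := by
      rintro hmem
      obtain ⟨t, ht, hts⟩ := Finset.mem_image.1 hmem
      have : t = B.erase (Fin.last m) := by
        rw [← upF_downF (hfree t ht), hts, hupFs]
      subst this
      obtain ⟨z, hz⟩ := hBe_ne
      obtain ⟨u, -, huniq2⟩ := hcov z
      have e1 : B.erase (Fin.last m) = u := huniq2 _ ⟨Finset.mem_of_mem_erase ht, hz⟩
      have e2 : B = u := huniq2 _ ⟨hB, Finset.mem_of_mem_erase hz⟩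
      exact Finset.ne_of_mem_erase ht (e1.trans e2.symm)
    have hQcard : (insert s ((P.erase B).image downF)).card = j + 1 := by
      rw [Finset.card_insert_of_notMem hs_not_img, hcard_img]
    refine ⟨Sum.inr ⟨⟨insert s ((P.erase B).image downF), hQcard, ?_, ?_⟩,
      s, Finset.mem_insert_self _ _⟩, ?_⟩
    · intro u hu
      rcases Finset.mem_insert.1 hu with rfl | hu
      · exact downF_nonempty hBe_ne hBe_free
      · obtain ⟨t, ht, rfl⟩ := Finset.mem_image.1 hu
        exact downF_nonempty (hne t (Finset.mem_of_mem_erase ht)) (hfree t ht)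
    · intro y
      obtain ⟨t, ⟨ht, hyt⟩, htuniq⟩ := hcov y.castSucc
      rcases eq_or_ne t B with rfl | htB
      · refine ⟨s, ⟨Finset.mem_insert_self _ _, ?_⟩, ?_⟩
        · exact mem_downF.2 (Finset.mem_erase.2 ⟨Fin.ne_of_lt (Fin.castSucc_lt_last y), hyt⟩)
        · rintro u ⟨hu, hyu⟩
          rcases Finset.mem_insert.1 hu with rfl | hu
          · rfl
          · obtain ⟨t', ht', rfl⟩ := Finset.mem_image.1 hu
            exact absurd (htuniq t' ⟨Finset.mem_of_mem_erase ht', mem_downF.1 hyu⟩)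
              (Finset.ne_of_mem_erase ht')
      · refine ⟨downF t, ⟨Finset.mem_insert_of_mem
          (Finset.mem_image_of_mem _ (Finset.mem_erase.2 ⟨htB, ht⟩)), mem_downF.2 hyt⟩, ?_⟩
        rintro u ⟨hu, hyu⟩
        rcases Finset.mem_insert.1 hu with rfl | hu
        · have hyB : y.castSucc ∈ B := Finset.mem_of_mem_erase (mem_downF.1 hyu)
          exact absurd (htuniq B ⟨hB, hyB⟩).symm htB
        · obtain ⟨t', ht', rfl⟩ := Finset.mem_image.1 hu
          rw [htuniq t' ⟨Finset.mem_of_mem_erase ht', mem_downF.1 hyu⟩]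
    · apply Subtype.ext
      show insert (insert (Fin.last m) (upF s))
        (((insert s ((P.erase B).image downF)).erase s).image upF) = P
      rw [hupFs, Finset.insert_erase hlB, Finset.erase_insert hs_not_img, himg,
        Finset.insert_erase hB]

end Rec


lemma part_eq (n : ℕ) (P : Finset (Finset (Fin n))) (hc : P.card = n)
    (hne : ∀ s ∈ P, s.Nonempty) (hcov : ∀ x : Fin n, ∃! s, s ∈ P ∧ x ∈ s) :
    P = Finset.univ.image (fun x : Fin n => {x}) := by
  have hdisj : ∀ s ∈ P, ∀ t ∈ P, s ≠ t → Disjoint s t := by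
    intro s hs t ht hst
    rw [Finset.disjoint_left]
    intro x hxs hxt
    obtain ⟨u, -, hu⟩ := hcov x
    exact hst ((hu s ⟨hs, hxs⟩).trans (hu t ⟨ht, hxt⟩).symm)
  have hbU : P.biUnion (fun s => s) = Finset.univ := by
    apply Finset.eq_univ_of_forall
    intro x
    obtain ⟨s, ⟨hs, hxs⟩, -⟩ := hcov x
    exact Finset.mem_biUnion.2 ⟨s, hs, hxs⟩
  have hsum : ∑ s ∈ P, s.card = n := by
    rw [← Finset.card_biUnion hdisj, hbU, Finset.card_univ, Fintype.card_fin]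
  have hone : ∀ s ∈ P, s.card = 1 := by
    have h1 : ∀ s ∈ P, 1 ≤ s.card := fun s hs => Finset.card_pos.2 (hne s hs)
    have : ∑ s ∈ P, (1:ℕ) = ∑ s ∈ P, s.card := by
      rw [hsum, Finset.sum_const, smul_eq_mul, mul_one, hc]
    intro s hs
    exact ((Finset.sum_eq_sum_iff_of_le h1).1 this s hs).symm
  apply Finset.ext
  intro s
  simp only [Finset.mem_image, Finset.mem_univ, true_and]
  constructor
  · intro hs
    obtain ⟨x, hx⟩ := Finset.card_eq_one.1 (hone s hs)
    exact ⟨x, hx.symm⟩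
  · rintro ⟨x, rfl⟩
    obtain ⟨s, ⟨hs, hxs⟩, -⟩ := hcov x
    obtain ⟨y, rfl⟩ := Finset.card_eq_one.1 (hone s hs)
    simp at hxs; subst hxs; exact hs


noncomputable def H (n k : ℕ) : ℕ :=
  ∑ f ∈ Finset.univ.filter (fun f : Fin k → Fin n =>
      ∀ a b : Fin k, a ≤ b → f a ≤ f b),
    ∏ i : Fin k, ((f i : ℕ) + 1)

lemma H_zero_right (n : ℕ) : H n 0 = 1 := by
  rw [H, Finset.filter_true_of_mem (fun f _ => fun a => a.elim0)]
  simp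

lemma H_zero_left (k : ℕ) : H 0 (k+1) = 0 := by
  rw [H]
  have : IsEmpty (Fin (k+1) → Fin 0) := ⟨fun f => (f 0).elim0⟩
  simp [Finset.univ_eq_empty]

lemma pieceNe (n k : ℕ) :
    ∑ f ∈ Finset.univ.filter (fun f : Fin (k+1) → Fin (n+1) =>
        (∀ a b : Fin (k+1), a ≤ b → f a ≤ f b) ∧ ¬ f (Fin.last k) = Fin.last n),
      ∏ i : Fin (k+1), ((f i : ℕ) + 1) = H n (k+1) := by
  rw [H]
  refine Finset.sum_bij'
    (i := fun f hf => fun a => (f a).castPred ?_)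
    (j := fun g hg => Fin.castSucc ∘ g) ?_ ?_ ?_ ?_ ?_
  · -- f a ≠ last
    simp only [Finset.mem_filter, Finset.mem_univ, true_and] at hf
    obtain ⟨hmono, hlast⟩ := hf
    exact Fin.ne_of_lt (lt_of_le_of_lt (hmono a (Fin.last k) (Fin.le_last a))
      (Fin.lt_last_iff_ne_last.2 hlast))
  · -- i maps into target
    intro f hf
    simp only [Finset.mem_filter, Finset.mem_univ, true_and] at hf ⊢
    intro a b hab
    rw [Fin.le_def]
    simp only [Fin.coe_castPred]
    exact hf.1 a b hab
  · -- j maps into source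
    intro g hg
    simp only [Finset.mem_filter, Finset.mem_univ, true_and] at hg ⊢
    constructor
    · intro a b hab
      exact Fin.castSucc_le_castSucc_iff.2 (hg a b hab)
    · exact Fin.ne_of_lt (Fin.castSucc_lt_last _)
  · -- left inverse
    intro f hf
    funext a
    simp [Fin.castSucc_castPred]
  · -- right inverse
    intro g hg
    funext a
    simp
  · -- summand equality
    intro f hf
    apply Finset.prod_congr rfl
    intro i _
    simp [Fin.coe_castPred]

lemma pieceEq (n k : ℕ) :
    ∑ f ∈ Finset.univ.filter (fun f : Fin (k+1) → Fin (n+1) =>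
        (∀ a b : Fin (k+1), a ≤ b → f a ≤ f b) ∧ f (Fin.last k) = Fin.last n),
      ∏ i : Fin (k+1), ((f i : ℕ) + 1) = (n+1) * H (n+1) k := by
  rw [H, Finset.mul_sum]
  refine Finset.sum_bij'
    (i := fun f _ => f ∘ Fin.castSucc)
    (j := fun g _ => Fin.snoc g (Fin.last n)) ?_ ?_ ?_ ?_ ?_
  · -- into target
    intro f hf
    simp only [Finset.mem_filter, Finset.mem_univ, true_and] at hf ⊢
    intro a b hab
    exact hf.1 _ _ (Fin.castSucc_le_castSucc_iff.2 hab)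
  · -- into source
    intro g hg
    simp only [Finset.mem_filter, Finset.mem_univ, true_and] at hg ⊢
    constructor
    · intro a b hab
      rcases eq_or_ne b (Fin.last k) with rfl | hb
      · rw [Fin.snoc_last]; exact Fin.le_last _
      · obtain ⟨b', rfl⟩ := Fin.eq_castSucc_of_ne_last hb
        have ha : a ≠ Fin.last k := by
          intro h
          subst h
          exact absurd (lt_of_le_of_lt hab (Fin.castSucc_lt_last b')) (lt_irrefl _)
        obtain ⟨a', rfl⟩ := Fin.eq_castSucc_of_ne_last ha
        rw [Fin.snoc_castSucc, Fin.snoc_castSucc]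
        exact hg a' b' (Fin.castSucc_le_castSucc_iff.1 hab)
    · exact Fin.snoc_last _ _
  · -- left inverse
    intro f hf
    simp only [Finset.mem_filter, Finset.mem_univ, true_and] at hf
    funext x
    rcases eq_or_ne x (Fin.last k) with rfl | hx
    · simpa [Fin.snoc_last] using hf.2.symm
    · obtain ⟨y, rfl⟩ := Fin.eq_castSucc_of_ne_last hx
      simp [Fin.snoc_castSucc]
  · -- right inverse
    intro g hg
    funext a
    simp [Fin.snoc_castSucc]
  · -- summands
    intro f hf
    simp only [Finset.mem_filter, Finset.mem_univ, true_and] at hf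
    rw [Fin.prod_univ_castSucc, hf.2, Fin.val_last, mul_comm]
    rfl

lemma H_rec (n k : ℕ) : H (n+1) (k+1) = H n (k+1) + (n+1) * H (n+1) k := by
  rw [H, ← Finset.sum_filter_add_sum_filter_not _ (fun f => f (Fin.last k) = Fin.last n),
    Finset.filter_filter, Finset.filter_filter, pieceEq, pieceNe, add_comm]


lemma stirling_eq_card_PtP (n k : ℕ) : stirlingSubset n k = Nat.card (PtP n k) := rfl

lemma stirling_diag (n : ℕ) : stirlingSubset n n = 1 := by
  rw [stirling_eq_card_PtP, Nat.card_eq_one_iff_unique]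
  constructor
  · constructor
    intro ⟨P, hc, hne, hcov⟩ ⟨P', hc', hne', hcov'⟩
    apply Subtype.ext
    show P = P'
    rw [part_eq n P hc hne hcov, part_eq n P' hc' hne' hcov']
  · refine ⟨⟨Finset.univ.image (fun x : Fin n => {x}), ?_, ?_, ?_⟩⟩
    · rw [Finset.card_image_of_injective _ (fun a b h => by simpa using h)]
      simp
    · intro s hs; simp at hs; obtain ⟨x, rfl⟩ := hs; exact ⟨x, by simp⟩
    · intro x
      refine ⟨{x}, ⟨by simp, by simp⟩, ?_⟩
      rintro s ⟨hs, hxs⟩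
      simp at hs; obtain ⟨y, rfl⟩ := hs
      simp at hxs; subst hxs; rfl

lemma stirling_zero (k : ℕ) : stirlingSubset (k+1) 0 = 0 := by
  rw [stirling_eq_card_PtP, Nat.card_eq_zero]
  left
  constructor
  rintro ⟨P, hc, -, hcov⟩
  obtain ⟨s, ⟨hs, -⟩, -⟩ := hcov 0
  rw [Finset.card_eq_zero] at hc
  subst hc
  exact absurd hs (by simp)

lemma stirling_rec (m j : ℕ) :
    stirlingSubset (m+1) (j+1) = stirlingSubset m j + (j+1) * stirlingSubset m (j+1) := by
  rw [stirling_eq_card_PtP,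
    ← Nat.card_congr (Equiv.ofBijective _ ⟨Phi_injective (m := m) (j := j), Phi_surjective⟩),
    Nat.card_sum]
  congr 1
  rw [Nat.card_congr ((Equiv.sigmaCongrRight
    (fun Q : PtP m (j+1) => Finset.equivFinOfCardEq Q.2.1)).trans (Equiv.sigmaEquivProd _ _)),
    Nat.card_prod, mul_comm]
  have : Nat.card (Fin (j+1)) = j + 1 := by
    rw [Nat.card_eq_fintype_card, Fintype.card_fin]
  rw [this]
  rfl

lemma key : ∀ k n, H n k = stirlingSubset (n+k) n := by
  intro k
  induction k with
  | zero => intro n; rw [H_zero_right, Nat.add_zero, stirling_diag]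
  | succ k ih =>
    intro n
    induction n with
    | zero => rw [H_zero_left, Nat.zero_add, stirling_zero]
    | succ n ihn =>
      rw [H_rec, ihn, ih (n+1)]
      rw [show n+1+(k+1) = (n+k+1)+1 by omega, show n+1+k = n+k+1 by omega,
        show n+(k+1) = n+k+1 by omega, stirling_rec (n+k+1) n]

end Aux

/-- The complete homogeneous symmetric sum `∑ x₁⋯x_k` over all weakly increasing
sequences `1 ≤ x₁ ≤ ⋯ ≤ x_k ≤ n` equals `S(n+k, n)`.  Here a weakly increasing
sequence is encoded as a monotone `f : Fin k → Fin n`, with `x_i = f i + 1 ∈ {1,…,n}`. -/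
theorem stmt_9 (n k : ℕ) :
    ∑ f ∈ Finset.univ.filter (fun f : Fin k → Fin n =>
        ∀ a b : Fin k, a ≤ b → f a ≤ f b),
      ∏ i : Fin k, ((f i : ℕ) + 1) = stirlingSubset (n + k) n :=
  key k n
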